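/- Let d = (0 = d_0 < d_1 < ... < d_s) and d' = (0 = d'_0 < d'_1 < ... < d'_s) be degree sequences such that d < d' ≤ (d')^{∨, d_s} < d^{∨, d_s} (pointwise). Then Ψ_d · f_1(d̃) ≥ Ψ_{d'} · f_1(d̃'). -/

import Mathlib

/-- `f₁(e) = Σ_{i=1}^s (e_i - i)`. -/
def f1 (s : ℕ) (e : ℕ → ℤ) : ℤ := ∑ i ∈ Finset.Icc 1 s, (e i - (i : ℤ))

/-- The tilde sequence of a degree sequence `d` with `d_0 = 0`:
`d̃_i = min{d_s - d_{s-i}, ⌊d_s/2⌋}` for `1 ≤ i ≤ k = ⌊s/2⌋` and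
`d̃_i = max{d_i, ⌈d_s/2⌉}` for `k+1 ≤ i ≤ s`.
(Here `d s / 2 = ⌊d_s/2⌋` and `(d s + 1)/2 = ⌈d_s/2⌉`, as `d_s ≥ 0`.) -/
def tilde (s : ℕ) (d : ℕ → ℤ) : ℕ → ℤ := fun i =>
  if i ≤ s / 2 then min (d s - d (s - i)) (d s / 2) else max (d i) ((d s + 1) / 2)

/-- `Ψ_d = Π_{i=1}^s d̃_i`. -/
def Psi (s : ℕ) (d : ℕ → ℤ) : ℤ := ∏ i ∈ Finset.Icc 1 s, tilde s d i

open Finset in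
@[to_additive]
lemma prod_pair {M : Type*} [CommMonoid M] (n r : ℕ) (h : r + r < n) (T : ℕ → M) :
    ∏ i ∈ Finset.Icc 1 n, T i
      = T n * (∏ i ∈ Finset.Icc 1 r, (T i * T (n - i)))
          * ∏ i ∈ Finset.Icc (r + 1) (n - r - 1), T i := by
  have h1 : ∏ i ∈ Finset.Icc 1 r, (T i * T (n - i))
      = (∏ i ∈ Finset.Icc 1 r, T i) * ∏ i ∈ Finset.Icc 1 r, T (n - i) :=
    Finset.prod_mul_distrib
  have h2 : ∏ i ∈ Finset.Icc 1 r, T (n - i) = ∏ j ∈ Finset.Icc (n - r) (n - 1), T j := by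
    apply Finset.prod_nbij' (fun i => n - i) (fun j => n - j)
    · intro a ha; simp only [Finset.mem_Icc] at *; omega
    · intro a ha; simp only [Finset.mem_Icc] at *; omega
    · intro a ha; simp only [Finset.mem_Icc] at *; omega
    · intro a ha; simp only [Finset.mem_Icc] at *; omega
    · intro a ha; rfl
  have e1 : Finset.Icc 1 n = Finset.Ico 1 (n+1) := by rw [Finset.Ico_add_one_right_eq_Icc]
  have e2 : (∏ i ∈ Finset.Ico 1 (r+1), T i) * ∏ i ∈ Finset.Ico (r+1) (n+1), T i
      = ∏ i ∈ Finset.Ico 1 (n+1), T i := Finset.prod_Ico_consecutive T (by omega) (by omega)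
  have e3 : (∏ i ∈ Finset.Ico (r+1) (n-r), T i) * ∏ i ∈ Finset.Ico (n-r) (n+1), T i
      = ∏ i ∈ Finset.Ico (r+1) (n+1), T i := Finset.prod_Ico_consecutive T (by omega) (by omega)
  have e4 : (∏ i ∈ Finset.Ico (n-r) n, T i) * ∏ i ∈ Finset.Ico n (n+1), T i
      = ∏ i ∈ Finset.Ico (n-r) (n+1), T i := Finset.prod_Ico_consecutive T (by omega) (by omega)
  have e5 : ∏ i ∈ Finset.Ico n (n+1), T i = T n := by simp
  have e6 : Finset.Ico 1 (r+1) = Finset.Icc 1 r := Finset.Ico_add_one_right_eq_Icc ..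
  have e7 : Finset.Ico (r+1) (n-r) = Finset.Icc (r+1) (n-r-1) := by
    rw [← Finset.Ico_add_one_right_eq_Icc]; congr 1; omega
  have e8 : Finset.Ico (n-r) n = Finset.Icc (n-r) (n-1) := by
    rw [← Finset.Ico_add_one_right_eq_Icc]; congr 1; omega
  rw [e1, ← e2, ← e3, ← e4, e5, e6, e7, e8, h1, h2]
  ac_rfl

/-- Monotonicity of the pair product `min(N-a, ⌊N/2⌋) * max(a, ⌈N/2⌉)` in `a`. -/
lemma pairmul (N a a' : ℤ) (h0 : 0 ≤ a) (haa : a ≤ a') (ha'N : a' ≤ N) :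
    min (N - a') (N / 2) * max a' ((N + 1) / 2)
      ≤ min (N - a) (N / 2) * max a ((N + 1) / 2) := by
  rcases le_or_gt a' (N / 2) with h | h
  · have e1 : min (N - a') (N / 2) = N / 2 := by omega
    have e2 : max a' ((N + 1) / 2) = (N + 1) / 2 := by omega
    have e3 : min (N - a) (N / 2) = N / 2 := by omega
    have e4 : max a ((N + 1) / 2) = (N + 1) / 2 := by omega
    rw [e1, e2, e3, e4]
  · have e1 : min (N - a') (N / 2) = N - a' := by omega
    have e2 : max a' ((N + 1) / 2) = a' := by omega
    rw [e1, e2]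
    rcases le_or_gt a (N / 2) with h2 | h2
    · have e3 : min (N - a) (N / 2) = N / 2 := by omega
      have e4 : max a ((N + 1) / 2) = (N + 1) / 2 := by omega
      rw [e3, e4]
      have key : 0 ≤ (a' - N / 2) * (a' - (N + 1) / 2) :=
        mul_nonneg (by omega) (by omega)
      have hsum : N / 2 + (N + 1) / 2 = N := by omega
      nlinarith [key]
    · have e3 : min (N - a) (N / 2) = N - a := by omega
      have e4 : max a ((N + 1) / 2) = a := by omega
      rw [e3, e4]
      have key : 0 ≤ (a' - a) * (a + a' - N) :=
        mul_nonneg (by omega) (by omega)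
      nlinarith [key]

/-- comparison lemma. Let `d, d'` be degree sequences
with `d_0 = d'_0 = 0` satisfying `d < d' ≤ (d')^{∨,d_s} < d^{∨,d_s}`
(pointwise on `0, …, s`; the strictness of both outer inequalities is the
single condition `d ≠ d'`, and `(d')^{∨,d_s} ≤ d^{∨,d_s}` follows from `d ≤ d'`).
Then `Ψ_{d'}·f₁(d̃') ≤ Ψ_d·f₁(d̃)`. -/

theorem stmt1 (s : ℕ) (hs : 1 ≤ s) (d d' : ℕ → ℤ)
    (hd : ∀ i < s, d i < d (i + 1)) (hd0 : d 0 = 0)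
    (hd' : ∀ i < s, d' i < d' (i + 1)) (hd'0 : d' 0 = 0)
    (hle : ∀ i ≤ s, d i ≤ d' i) (hne : ∃ i ≤ s, d i ≠ d' i)
    (hdual : ∀ i ≤ s, d' i ≤ d s - d' (s - i)) :
    Psi s d' * f1 s (tilde s d') ≤ Psi s d * f1 s (tilde s d) := by
  clear hne
  -- growth estimates
  have gap : ∀ (e : ℕ → ℤ), (∀ i < s, e i < e (i+1)) →
      ∀ i j : ℕ, i ≤ j → j ≤ s → e i + ((j : ℤ) - (i : ℤ)) ≤ e j := by
    intro e he i j hij hjs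
    induction j with
    | zero =>
      have : i = 0 := by omega
      subst this; simp
    | succ n ih =>
      rcases Nat.lt_or_ge i (n+1) with hlt | hge
      · have h1 := ih (by omega) (by omega)
        have h2 := he n (by omega)
        push_cast
        omega
      · have : i = n + 1 := by omega
        subst this; simp
  have gapd := gap d hd
  have gapd' := gap d' hd'
  have hsN : (s : ℤ) ≤ d s := by
    have := gapd 0 s (by omega) le_rfl
    rw [hd0] at this; push_cast at this; omega
  have hN0 : (0 : ℤ) ≤ d s := by omega
  have hds' : d' s = d s := by
    have h1 := hdual s le_rfl
    simp only [Nat.sub_self, hd'0] at h1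
    have h2 := hle s le_rfl
    omega
  set r := (s - 1) / 2 with hr
  have hrr : r + r < s := by omega
  -- value at s
  have hTs : tilde s d s = d s := by
    simp only [tilde, if_neg (by omega : ¬ s ≤ s / 2)]
    omega
  have hTs' : tilde s d' s = d s := by
    simp only [tilde, if_neg (by omega : ¬ s ≤ s / 2), hds']
    omega
  -- the middle values (only present for even s, at i = s/2)
  have hmid : ∀ i ∈ Finset.Icc (r+1) (s - r - 1),
      tilde s d i = d s / 2 ∧ tilde s d' i = d s / 2 := by
    intro i hi
    simp only [Finset.mem_Icc] at hi
    have hi2 : i = s / 2 ∧ s = 2 * (s / 2) := by omega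
    obtain ⟨hik, hse⟩ := hi2
    have hsi : s - i = i := by omega
    have h1 := hdual i (by omega)
    rw [hsi] at h1
    have h2 := hle i (by omega)
    have h3 := gapd' 0 i (by omega) (by omega)
    rw [hd'0] at h3
    constructor
    · simp only [tilde, if_pos (by omega : i ≤ s / 2), hsi]
      omega
    · simp only [tilde, if_pos (by omega : i ≤ s / 2), hsi, hds']
      omega
  -- the pair values for 1 ≤ i ≤ r
  have hpairmem : ∀ i ∈ Finset.Icc 1 r, 1 ≤ i ∧ i ≤ r ∧ i ≤ s / 2 ∧ ¬ (s - i ≤ s / 2)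
      ∧ s - (s - i) = i ∧ s - i ≤ s := by
    intro i hi
    simp only [Finset.mem_Icc] at hi
    refine ⟨hi.1, hi.2, by omega, by omega, by omega, by omega⟩
  have hbounds : ∀ i ∈ Finset.Icc 1 r,
      0 ≤ d (s - i) ∧ d (s - i) ≤ d' (s - i) ∧ d' (s - i) ≤ d s := by
    intro i hi
    obtain ⟨h1, h2, h3, h4, h5, h6⟩ := hpairmem i hi
    have g1 := gapd 0 (s - i) (by omega) h6
    rw [hd0] at g1
    have g2 := hle (s - i) h6
    have g3 := hdual (s - i) h6
    rw [h5] at g3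
    have g4 := gapd' 0 i (by omega) (by omega)
    rw [hd'0] at g4
    refine ⟨by push_cast at g1 ⊢; omega, g2, by push_cast at g4; omega⟩
  have hpairT : ∀ i ∈ Finset.Icc 1 r,
      tilde s d i = min (d s - d (s - i)) (d s / 2)
      ∧ tilde s d (s - i) = max (d (s - i)) ((d s + 1) / 2)
      ∧ tilde s d' i = min (d s - d' (s - i)) (d s / 2)
      ∧ tilde s d' (s - i) = max (d' (s - i)) ((d s + 1) / 2) := by
    intro i hi
    obtain ⟨h1, h2, h3, h4, h5, h6⟩ := hpairmem i hi
    refine ⟨?_, ?_, ?_, ?_⟩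
    · simp only [tilde, if_pos h3]
    · simp only [tilde, if_neg h4]
    · simp only [tilde, if_pos h3, hds']
    · simp only [tilde, if_neg h4, hds', h5]
  -- sum equality
  have hsumeq : ∑ i ∈ Finset.Icc 1 s, tilde s d' i = ∑ i ∈ Finset.Icc 1 s, tilde s d i := by
    rw [sum_pair s r hrr, sum_pair s r hrr, hTs, hTs']
    congr 1
    · congr 1
      apply Finset.sum_congr rfl
      intro i hi
      obtain ⟨e1, e2, e3, e4⟩ := hpairT i hi
      obtain ⟨b1, b2, b3⟩ := hbounds i hi
      rw [e1, e2, e3, e4]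
      omega
    · apply Finset.sum_congr rfl
      intro i hi
      obtain ⟨m1, m2⟩ := hmid i hi
      rw [m1, m2]
  have hf1eq : f1 s (tilde s d') = f1 s (tilde s d) := by
    simp only [f1, Finset.sum_sub_distrib, hsumeq]
  -- f1 nonneg
  have hf1nn : 0 ≤ f1 s (tilde s d) := by
    apply Finset.sum_nonneg
    intro i hi
    simp only [Finset.mem_Icc] at hi
    by_cases hik : i ≤ s / 2
    · simp only [tilde, if_pos hik]
      have g1 := gapd (s - i) s (by omega) le_rfl
      push_cast [Nat.cast_sub (by omega : i ≤ s)] at g1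
      omega
    · simp only [tilde, if_neg hik]
      have g1 := gapd 0 i (by omega) (by omega)
      rw [hd0] at g1
      push_cast at g1
      omega
  -- Psi inequality
  have hPsi : Psi s d' ≤ Psi s d := by
    unfold Psi
    rw [prod_pair s r hrr, prod_pair s r hrr, hTs, hTs']
    have hmideq : ∏ i ∈ Finset.Icc (r+1) (s-r-1), tilde s d' i
        = ∏ i ∈ Finset.Icc (r+1) (s-r-1), tilde s d i := by
      apply Finset.prod_congr rfl
      intro i hi
      obtain ⟨m1, m2⟩ := hmid i hi
      rw [m1, m2]
    rw [hmideq]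
    have hmidnn : 0 ≤ ∏ i ∈ Finset.Icc (r+1) (s-r-1), tilde s d i := by
      apply Finset.prod_nonneg
      intro i hi
      rw [(hmid i hi).1]
      omega
    apply mul_le_mul_of_nonneg_right _ hmidnn
    apply mul_le_mul_of_nonneg_left _ hN0
    apply Finset.prod_le_prod
    · intro i hi
      obtain ⟨e1, e2, e3, e4⟩ := hpairT i hi
      obtain ⟨b1, b2, b3⟩ := hbounds i hi
      rw [e3, e4]
      apply mul_nonneg <;> omega
    · intro i hi
      obtain ⟨e1, e2, e3, e4⟩ := hpairT i hi
      obtain ⟨b1, b2, b3⟩ := hbounds i hi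
      rw [e1, e2, e3, e4]
      exact pairmul (d s) (d (s-i)) (d' (s-i)) b1 b2 b3
  -- conclude
  rw [hf1eq]
  have hPsinn : 0 ≤ Psi s d' := by
    unfold Psi
    apply Finset.prod_nonneg
    intro i hi
    simp only [Finset.mem_Icc] at hi
    by_cases hik : i ≤ s / 2
    · simp only [tilde, if_pos hik, hds']
      have g3 := hdual (s - i) (by omega)
      have heq : s - (s - i) = i := by omega
      rw [heq] at g3
      have g4 := gapd' 0 i (by omega) (by omega)
      rw [hd'0] at g4
      push_cast at g4
      omega
    · simp only [tilde, if_neg hik, hds']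
      have g4 := gapd' 0 i (by omega) (by omega)
      rw [hd'0] at g4
      push_cast at g4
      omega
  exact mul_le_mul_of_nonneg_right hPsi hf1nn
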